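/- Let h' be defined by h'(x, s) = β_s⁻¹(h(γ_s(x), rv(s))), where rv(s) = ρ_s(s). Assume that for every s, the maps γ_{rv(s)}, β_{rv(s)}, and ρ_{rv(s)} are identity maps. Then for every s ∈ S and x ∈ X, β_s(h'(x, s)) = h'(γ_s(x), rv(s)); that is, the new controller h' is (β_s, γ_s, rv)-symmetric for every s. -/
import Mathlib


/-- Define `h' x s = β_s⁻¹ (h (γ_s x) (rv s))` where `rv s = ρ_s s`.
If `γ_{rv s}`, `β_{rv s}`, `ρ_{rv s}` are identity maps, then
`β_s (h' x s) = h' (γ_s x) (rv s)`, i.e. `h'` is `(β_s, γ_s, rv)`-symmetric. -/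
theorem stmt3 {X S U : Type*}
    (h : X → S → U)
    (γ : S → X → X) (ρ : S → S → S) (β : S → U → U) (βinv : S → U → U)
    (hβleft : ∀ s, Function.LeftInverse (βinv s) (β s))
    (hβright : ∀ s, Function.RightInverse (βinv s) (β s))
    (rv : S → S) (hrv : ∀ s, rv s = ρ s s)
    (hγid : ∀ s, γ (rv s) = id)
    (hβid : ∀ s, β (rv s) = id)
    (hρid : ∀ s, ρ (rv s) = id)
    (h' : X → S → U)
    (hh' : ∀ x s, h' x s = βinv s (h (γ s x) (rv s))) :
    ∀ (s : S) (x : X), β s (h' x s) = h' (γ s x) (rv s) := by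
  intro s x
  have hrvrv : rv (rv s) = rv s := by rw [hrv (rv s), hρid s]; rfl
  have hβinvid : ∀ u, βinv (rv s) u = u := by
    intro u
    have := hβleft (rv s) u
    rwa [hβid s] at this
  rw [hh', hh', hβright, hγid, hrvrv, hβinvid]
  rfl
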